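/- Suppose that X is a Fréchet sequence space over ℤ in which the sequence (e_n)_{n∈ℤ} of canonical vectors is a basis, that (‖·‖_k)_{k∈ℕ} is an increasing sequence of seminorms inducing the topology of X, and that the bilateral weighted forward shift F_w (for a weight sequence w = (w_n)_{n∈ℤ} of nonzero scalars) is an invertible operator on X. Then the following assertions are equivalent: (i) F_w : X → X is topologically expansive; (ii) there exists k ∈ ℕ such that sup_{n∈ℕ} |w₁ ⋯ w_n| ‖e_{n+1}‖_k = ∞ or sup_{n∈ℕ} |w_{−n+1} ⋯ w₀|⁻¹ ‖e_{−n+1}‖_k = ∞; (iii) F_w : X → X is topologically positively expansive or F_w⁻¹ : X → X is topologically positively expansive. -/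

import Mathlib

open Filter Topology Set Uniformity

/-- An invertible operator `T` is topologically expansive: for each nonzero `x` there is `k`
with `sup_{n∈ℤ} ‖Tⁿ x‖_k = ∞`. -/
def TopologicallyExpansiveSeq {𝕂 : Type*} [RCLike 𝕂] {E : Type*} [AddCommGroup E] [Module 𝕂 E]
    [TopologicalSpace E] [IsTopologicalAddGroup E]
    (p : ℕ → Seminorm 𝕂 E) (T : E ≃L[𝕂] E) : Prop :=
  ∀ x : E, x ≠ 0 → ∃ k : ℕ, ∀ R : ℝ, ∃ n : ℤ, R < p k ((T ^ n) x)

/-- An operator `T` is topologically positively expansive: for each nonzero `x` there is `k`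
with `sup_{n∈ℕ} ‖Tⁿ x‖_k = ∞`. -/
def TopologicallyPositivelyExpansiveSeq {𝕂 : Type*} [RCLike 𝕂] {E : Type*} [AddCommGroup E]
    [Module 𝕂 E] (p : ℕ → Seminorm 𝕂 E) (T : E → E) : Prop :=
  ∀ x : E, x ≠ 0 → ∃ k : ℕ, ∀ R : ℝ, ∃ n : ℕ, 1 ≤ n ∧ R < p k (T^[n] x)

/-- Equicontinuity of the coordinate projections, via Banach–Steinhaus. -/
theorem weightedShift_aux_EC
    {𝕂 : Type*} [RCLike 𝕂] {E : Type*} [AddCommGroup E] [Module 𝕂 E]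
    [TopologicalSpace E] [IsTopologicalAddGroup E] [ContinuousSMul 𝕂 E]
    (p : ℕ → Seminorm 𝕂 E) (hp : WithSeminorms p) (hmono : Monotone p)
    (hcomplete : ∀ u : ℕ → E,
      (∀ V ∈ 𝓝 (0 : E), ∃ n₀ : ℕ, ∀ m ≥ n₀, ∀ n ≥ n₀, u n - u m ∈ V) →
      ∃ x : E, Tendsto u atTop (𝓝 x))
    (π : ℤ → E →L[𝕂] E)
    (H : ∀ (k : ℕ) (x : E), BddAbove (range fun j : ℤ => p k (π j x))) :
    ∀ k : ℕ, ∃ (k' : ℕ) (C : ℝ), 0 < C ∧ ∀ (j : ℤ) (x : E), p k (π j x) ≤ C * p k' x := by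
  letI : UniformSpace E := IsTopologicalAddGroup.rightUniformSpace E
  haveI : IsUniformAddGroup E := isUniformAddGroup_of_addCommGroup
  haveI : FirstCountableTopology E := hp.firstCountableTopology
  haveI : (𝓤 E).IsCountablyGenerated := IsUniformAddGroup.uniformity_countably_generated
  haveI : CompleteSpace E := by
    refine UniformSpace.complete_of_cauchySeq_tendsto fun u hu => hcomplete u fun V hV => ?_
    rw [cauchySeq_iff] at hu
    obtain ⟨N, hN⟩ := hu {q : E × E | q.2 - q.1 ∈ V}
      (by rw [uniformity_eq_comap_nhds_zero]; exact preimage_mem_comap hV)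
    exact ⟨N, fun m hm n hn => hN m hm n hn⟩
  letI : PseudoMetricSpace E := UniformSpace.pseudoMetricSpace E
  haveI : BarrelledSpace 𝕂 E := inferInstance
  intro k
  have hbdd : BddAbove (range fun j : ℤ => (p k).comp (π j).toLinearMap) :=
    Seminorm.bddAbove_range_iff.mpr (H k)
  have hQcont : Continuous ⇑(⨆ j : ℤ, (p k).comp (π j).toLinearMap) := by
    rw [Seminorm.coe_iSup_eq hbdd]
    exact Seminorm.continuous_iSup _
      (fun j => ((hp.continuous_seminorm k).comp (π j).continuous :
        Continuous (⇑(p k) ∘ ⇑(π j)))) hbdd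
  obtain ⟨s, C, hC, hle⟩ := Seminorm.bound_of_continuous hp _ hQcont
  refine ⟨s.sup id, C + 1, by positivity, fun j x => ?_⟩
  have h1 : p k (π j x) ≤ (⨆ j : ℤ, (p k).comp (π j).toLinearMap) x :=
    (le_ciSup hbdd j) x
  have h2 : (⨆ j : ℤ, (p k).comp (π j).toLinearMap) x ≤ (C : ℝ) * (s.sup p) x := hle x
  have h3 : (s.sup p) x ≤ p (s.sup id) x := by
    have : s.sup p ≤ p (s.sup id) :=
      Finset.sup_le fun i hi => hmono (Finset.le_sup (f := id) hi)
    exact this x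
  calc p k (π j x) ≤ (⨆ j : ℤ, (p k).comp (π j).toLinearMap) x := h1
    _ ≤ (C : ℝ) * (s.sup p) x := h2
    _ ≤ (C : ℝ) * p (s.sup id) x := mul_le_mul_of_nonneg_left h3 C.coe_nonneg
    _ ≤ ((C : ℝ) + 1) * p (s.sup id) x :=
        mul_le_mul_of_nonneg_right (by norm_num) (apply_nonneg _ _)

set_option maxHeartbeats 800000 in
/-- Let `X` be a Fréchet sequence space over `ℤ` (realized by a continuous-in-each-coordinate
injective linear embedding `ι : X → 𝕂^ℤ`, with a complete metrizable locally convex topology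
induced by the increasing sequence of seminorms `p`), in which the canonical vectors `(e_n)`
form a basis, and suppose the bilateral weighted forward shift `F_w` (for a weight sequence `w`
of nonzero scalars) is an invertible operator on `X`. Then the following are equivalent:
(i) `F_w` is topologically expansive; (ii) there is `k` with
`sup_n |w₁ ⋯ w_n| ‖e_{n+1}‖_k = ∞` or `sup_n |w_{−n+1} ⋯ w₀|⁻¹ ‖e_{−n+1}‖_k = ∞`;
(iii) `F_w` or `F_w⁻¹` is topologically positively expansive. -/
theorem weightedShift_topologicallyExpansive_iff
    {𝕂 : Type*} [RCLike 𝕂] {E : Type*} [AddCommGroup E] [Module 𝕂 E]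
    [TopologicalSpace E] [IsTopologicalAddGroup E] [ContinuousSMul 𝕂 E] [T2Space E]
    (ι : E →ₗ[𝕂] (ℤ → 𝕂)) (hι_inj : Function.Injective ι)
    (hι_cont : ∀ j : ℤ, Continuous fun x : E => ι x j)
    (p : ℕ → Seminorm 𝕂 E) (hp : WithSeminorms p) (hmono : Monotone p)
    (hcomplete : ∀ u : ℕ → E,
      (∀ V ∈ 𝓝 (0 : E), ∃ n₀ : ℕ, ∀ m ≥ n₀, ∀ n ≥ n₀, u n - u m ∈ V) →
      ∃ x : E, Tendsto u atTop (𝓝 x))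
    (e : ℤ → E) (he : ∀ n j : ℤ, ι (e n) j = if j = n then 1 else 0)
    (hbasis : ∀ x : E, Tendsto
      (fun mn : ℕ × ℕ => ∑ j ∈ Finset.Icc (-(mn.1 : ℤ)) (mn.2 : ℤ), ι x j • e j)
      atTop (𝓝 x))
    (w : ℤ → 𝕂) (hw : ∀ n : ℤ, w n ≠ 0)
    (Fw : E ≃L[𝕂] E) (hFw : ∀ (x : E) (n : ℤ), ι (Fw x) n = w (n - 1) * ι x (n - 1)) :
    (TopologicallyExpansiveSeq p Fw ↔
      ∃ k : ℕ,
        (∀ R : ℝ, ∃ n : ℕ, 1 ≤ n ∧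
          R < (∏ j ∈ Finset.Icc (1 : ℤ) (n : ℤ), ‖w j‖) * p k (e ((n : ℤ) + 1))) ∨
        (∀ R : ℝ, ∃ n : ℕ, 1 ≤ n ∧
          R < (∏ j ∈ Finset.Icc (1 - (n : ℤ)) (0 : ℤ), ‖w j‖)⁻¹ * p k (e (1 - (n : ℤ))))) ∧
    ((∃ k : ℕ,
        (∀ R : ℝ, ∃ n : ℕ, 1 ≤ n ∧
          R < (∏ j ∈ Finset.Icc (1 : ℤ) (n : ℤ), ‖w j‖) * p k (e ((n : ℤ) + 1))) ∨
        (∀ R : ℝ, ∃ n : ℕ, 1 ≤ n ∧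
          R < (∏ j ∈ Finset.Icc (1 - (n : ℤ)) (0 : ℤ), ‖w j‖)⁻¹ * p k (e (1 - (n : ℤ))))) ↔
      (TopologicallyPositivelyExpansiveSeq p (⇑Fw) ∨
        TopologicallyPositivelyExpansiveSeq p (⇑Fw.symm))) := by
  classical
  -- the weight cocycle
  set D : ℤ → 𝕂 := fun j =>
    (∏ i ∈ Finset.Ico 1 (max 1 j), w i) * (∏ i ∈ Finset.Ico (min 1 j) 1, w i)⁻¹ with hD
  have hD1 : D 1 = 1 := by simp [hD]
  have hDne : ∀ j, D j ≠ 0 := fun j =>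
    mul_ne_zero (Finset.prod_ne_zero_iff.mpr fun i _ => hw i)
      (inv_ne_zero (Finset.prod_ne_zero_iff.mpr fun i _ => hw i))
  have hDnorm : ∀ j, 0 < ‖D j‖ := fun j => norm_pos_iff.mpr (hDne j)
  have hDsucc : ∀ j : ℤ, D (j + 1) = w j * D j := by
    intro j
    rcases le_or_gt 1 j with h | h
    · have h1 : max 1 (j + 1) = j + 1 := by omega
      have h2 : max 1 j = j := by omega
      have h3 : min 1 (j + 1) = 1 := by omega
      have h4 : min 1 j = 1 := by omega
      have h5 : Finset.Ico (1 : ℤ) (j + 1) = insert j (Finset.Ico 1 j) := by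
        ext i; simp [Finset.mem_Ico]; omega
      rw [hD]
      simp only [h1, h2, h3, h4, h5]
      rw [Finset.prod_insert (by simp)]
      ring
    · have h1 : max 1 (j + 1) = 1 := by omega
      have h2 : max 1 j = 1 := by omega
      have h3 : min 1 (j + 1) = j + 1 := by omega
      have h4 : min 1 j = j := by omega
      have h5 : Finset.Ico j (1 : ℤ) = insert j (Finset.Ico (j + 1) 1) := by
        ext i; simp [Finset.mem_Ico]; omega
      rw [hD]
      simp only [h1, h2, h3, h4, h5]
      rw [Finset.prod_insert (by simp), Finset.Ico_self, Finset.prod_empty, one_mul, one_mul,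
        mul_inv, ← mul_assoc, mul_inv_cancel₀ (hw j), one_mul]
  -- bridging products
  have hDpos_eq : ∀ n : ℕ, ∏ j ∈ Finset.Icc (1 : ℤ) (n : ℤ), ‖w j‖ = ‖D ((n : ℤ) + 1)‖ := by
    intro n
    have h1 : max 1 ((n : ℤ) + 1) = (n : ℤ) + 1 := by omega
    have h3 : min 1 ((n : ℤ) + 1) = 1 := by omega
    have h5 : Finset.Ico (1 : ℤ) ((n : ℤ) + 1) = Finset.Icc (1 : ℤ) (n : ℤ) := by
      ext i; simp [Finset.mem_Ico, Finset.mem_Icc]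
    rw [hD]
    simp only [h1, h3, h5, Finset.Ico_self, Finset.prod_empty, inv_one, mul_one]
    rw [norm_prod]
  have hDneg_eq : ∀ n : ℕ,
      (∏ j ∈ Finset.Icc (1 - (n : ℤ)) (0 : ℤ), ‖w j‖)⁻¹ = ‖D (1 - (n : ℤ))‖ := by
    intro n
    have h1 : max 1 (1 - (n : ℤ)) = 1 := by omega
    have h3 : min 1 (1 - (n : ℤ)) = 1 - (n : ℤ) := by omega
    have h5 : Finset.Ico (1 - (n : ℤ)) (1 : ℤ) = Finset.Icc (1 - (n : ℤ)) (0 : ℤ) := by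
      ext i; simp [Finset.mem_Ico, Finset.mem_Icc]; omega
    rw [hD]
    simp only [h1, h3, h5, Finset.Ico_self, Finset.prod_empty, one_mul]
    rw [norm_inv, norm_prod]
  -- coordinates of the inverse
  have hFwinv : ∀ (x : E) (j : ℤ), ι (Fw.symm x) j = (w j)⁻¹ * ι x (j + 1) := by
    intro x j
    have h := hFw (Fw.symm x) (j + 1)
    rw [Fw.apply_symm_apply] at h
    have h2 : j + 1 - 1 = j := by ring
    rw [h2] at h
    rw [h, inv_mul_cancel_left₀ (hw j)]
  -- coordinates of iterates
  have hcoord : ∀ (n : ℤ) (x : E) (j : ℤ),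
      ι ((Fw ^ n) x) j = (D j / D (j - n)) * ι x (j - n) := by
    intro n
    induction n using Int.induction_on with
    | zero =>
      intro x j
      have h1 : (Fw ^ (0 : ℤ)) x = x := rfl
      rw [h1, sub_zero, div_self (hDne j), one_mul]
    | succ n ih =>
      intro x j
      have hmul : (Fw ^ ((n : ℤ) + 1)) x = (Fw ^ (n : ℤ)) (Fw x) := by
        rw [zpow_add_one]; rfl
      rw [hmul, ih, hFw]
      have h1 : j - n - 1 = j - ((n : ℤ) + 1) := by ring
      rw [h1]
      have h2 : D (j - n) = w (j - ((n : ℤ) + 1)) * D (j - ((n : ℤ) + 1)) := by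
        have := hDsucc (j - ((n : ℤ) + 1))
        have h3 : j - ((n : ℤ) + 1) + 1 = j - n := by ring
        rwa [h3] at this
      rw [h2]
      have hwne := hw (j - ((n : ℤ) + 1))
      have hDne' := hDne (j - ((n : ℤ) + 1))
      field_simp
    | pred n ih =>
      intro x j
      have hmul : (Fw ^ (-(n : ℤ) - 1)) x = (Fw ^ (-(n : ℤ))) (Fw.symm x) := by
        rw [zpow_sub_one]; rfl
      rw [hmul, ih, hFwinv]
      have h1 : j - -(n : ℤ) + 1 = j - (-(n : ℤ) - 1) := by ring
      rw [h1]
      have h2 := hDsucc (j - -(n : ℤ))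
      rw [h1] at h2
      rw [h2]
      have hwne := hw (j - -(n : ℤ))
      have hDne' := hDne (j - -(n : ℤ))
      field_simp
  -- orbits of basis vectors
  have horb : ∀ (n t : ℤ), (Fw ^ n) (e t) = (D (t + n) / D t) • e (t + n) := by
    intro n t
    apply hι_inj
    funext j
    rw [hcoord, map_smul, Pi.smul_apply, he, he, smul_eq_mul]
    rcases eq_or_ne j (t + n) with rfl | hj
    · have h1 : t + n - n = t := by ring
      rw [h1]
      simp
    · have h1 : j - n ≠ t := fun h => hj (by omega)
      simp [h1, hj]
  have horbp : ∀ (k : ℕ) (n t : ℤ),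
      p k ((Fw ^ n) (e t)) = ‖D (t + n)‖ / ‖D t‖ * p k (e (t + n)) := by
    intro k n t
    rw [horb, map_smul_eq_mul, norm_div]
  have hene : ∀ t, e t ≠ 0 := by
    intro t h
    have h1 := he t t
    rw [h, map_zero] at h1
    simp at h1
  -- iterates as zpow
  have hiter : ∀ (n : ℕ) (x : E), (⇑Fw)^[n] x = (Fw ^ (n : ℤ)) x := by
    intro n
    induction n with
    | zero => intro x; rw [Function.iterate_zero_apply, Nat.cast_zero, zpow_zero]; rfl
    | succ n ih =>
      intro x
      rw [Function.iterate_succ_apply', ih]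
      rw [show (((n + 1 : ℕ)) : ℤ) = 1 + (n : ℤ) by push_cast; ring, zpow_add, zpow_one]
      rfl
  have hiterinv : ∀ (n : ℕ) (x : E), (⇑Fw.symm)^[n] x = (Fw ^ (-(n : ℤ))) x := by
    intro n
    induction n with
    | zero => intro x; rw [Function.iterate_zero_apply, Nat.cast_zero, neg_zero, zpow_zero]; rfl
    | succ n ih =>
      intro x
      rw [Function.iterate_succ_apply', ih]
      rw [show (-((n + 1 : ℕ) : ℤ)) = (-1) + (-(n : ℤ)) by push_cast; ring, zpow_add,
        zpow_neg_one]
      rfl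
  -- the projections
  let π : ℤ → E →L[𝕂] E := fun j =>
    { toFun := fun x => ι x j • e j
      map_add' := fun a b => by simp [add_smul]
      map_smul' := fun c a => by simp [mul_smul]
      cont := (hι_cont j).smul continuous_const }
  have hπ : ∀ (j : ℤ) (x : E), π j x = ι x j • e j := fun j x => rfl
  -- pointwise boundedness of the projections
  have H : ∀ (k : ℕ) (x : E), BddAbove (range fun j : ℤ => p k (π j x)) := by
    intro k x
    set S : ℕ × ℕ → E :=
      fun mn => ∑ j ∈ Finset.Icc (-(mn.1 : ℤ)) (mn.2 : ℤ), ι x j • e j with hS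
    have hSx : Tendsto S atTop (𝓝 x) := hbasis x
    have hdiag : Tendsto (fun n : ℕ => ((n : ℕ), (n : ℕ))) atTop atTop := by
      rw [← prod_atTop_atTop_eq]
      exact tendsto_id.prodMk tendsto_id
    have hdiag1 : Tendsto (fun n : ℕ => ((n : ℕ), n + 1)) atTop atTop := by
      rw [← prod_atTop_atTop_eq]
      exact tendsto_id.prodMk (tendsto_add_atTop_nat 1)
    have hdiag2 : Tendsto (fun n : ℕ => (n + 1, (n : ℕ))) atTop atTop := by
      rw [← prod_atTop_atTop_eq]
      exact (tendsto_add_atTop_nat 1).prodMk tendsto_id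
    have key1 : ∀ n : ℕ, S (n, n + 1) - S (n, n) = ι x ((n : ℤ) + 1) • e ((n : ℤ) + 1) := by
      intro n
      have h5 : Finset.Icc (-(n : ℤ)) ((n + 1 : ℕ) : ℤ) =
          insert ((n : ℤ) + 1) (Finset.Icc (-(n : ℤ)) (n : ℤ)) := by
        ext i; simp [Finset.mem_Icc]; omega
      rw [hS]
      simp only [h5]
      rw [Finset.sum_insert (by simp [Finset.mem_Icc]; try omega)]
      abel
    have key2 : ∀ n : ℕ, S (n + 1, n) - S (n, n) = ι x (-(n : ℤ) - 1) • e (-(n : ℤ) - 1) := by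
      intro n
      have h5 : Finset.Icc (-((n + 1 : ℕ) : ℤ)) ((n : ℕ) : ℤ) =
          insert (-(n : ℤ) - 1) (Finset.Icc (-(n : ℤ)) (n : ℤ)) := by
        ext i; simp [Finset.mem_Icc]; omega
      rw [hS]
      simp only [h5]
      rw [Finset.sum_insert (by simp [Finset.mem_Icc]; try omega)]
      abel
    have t1 : Tendsto (fun n : ℕ => p k (ι x ((n : ℤ) + 1) • e ((n : ℤ) + 1))) atTop (𝓝 0) := by
      have h6 : Tendsto (fun n : ℕ => S (n, n + 1) - S (n, n)) atTop (𝓝 0) := by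
        have := (hSx.comp hdiag1).sub (hSx.comp hdiag)
        rwa [sub_self] at this
      have h7 := ((hp.continuous_seminorm k).tendsto 0).comp h6
      rw [map_zero] at h7
      refine h7.congr fun n => ?_
      rw [Function.comp_apply, key1]
    have t2 : Tendsto (fun n : ℕ => p k (ι x (-(n : ℤ) - 1) • e (-(n : ℤ) - 1))) atTop (𝓝 0) := by
      have h6 : Tendsto (fun n : ℕ => S (n + 1, n) - S (n, n)) atTop (𝓝 0) := by
        have := (hSx.comp hdiag2).sub (hSx.comp hdiag)
        rwa [sub_self] at this
      have h7 := ((hp.continuous_seminorm k).tendsto 0).comp h6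
      rw [map_zero] at h7
      refine h7.congr fun n => ?_
      rw [Function.comp_apply, key2]
    obtain ⟨N1, hN1⟩ := (t1.eventually_lt_const one_pos).exists_forall_of_atTop
    obtain ⟨N2, hN2⟩ := (t2.eventually_lt_const one_pos).exists_forall_of_atTop
    set B : ℝ := 1 + ∑ j ∈ Finset.Icc (-(N2 : ℤ) - 1) ((N1 : ℤ) + 1), p k (ι x j • e j) with hB
    refine ⟨B, ?_⟩
    rintro r ⟨j, rfl⟩
    have hsum_nonneg : (0 : ℝ) ≤
        ∑ j ∈ Finset.Icc (-(N2 : ℤ) - 1) ((N1 : ℤ) + 1), p k (ι x j • e j) :=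
      Finset.sum_nonneg fun _ _ => apply_nonneg _ _
    show p k (ι x j • e j) ≤ B
    by_cases hj1 : (N1 : ℤ) + 1 ≤ j
    · have hn : ((j - 1).toNat : ℤ) = j - 1 := Int.toNat_of_nonneg (by omega)
      have h8 : j = ((j - 1).toNat : ℤ) + 1 := by omega
      have h9 : N1 ≤ (j - 1).toNat := by omega
      rw [h8]
      have := hN1 _ h9
      rw [hB]
      linarith
    · by_cases hj2 : j ≤ -(N2 : ℤ) - 1
      · have hn : ((-j - 1).toNat : ℤ) = -j - 1 := Int.toNat_of_nonneg (by omega)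
        have h8 : j = -(((-j - 1).toNat : ℕ) : ℤ) - 1 := by omega
        have h9 : N2 ≤ (-j - 1).toNat := by omega
        rw [h8]
        have := hN2 _ h9
        rw [hB]
        linarith
      · have hj3 : j ∈ Finset.Icc (-(N2 : ℤ) - 1) ((N1 : ℤ) + 1) := by
          simp [Finset.mem_Icc]; omega
        have := Finset.single_le_sum
          (f := fun j => (p k (ι x j • e j) : ℝ)) (fun _ _ => apply_nonneg _ _) hj3
        rw [hB]
        linarith
  -- equicontinuity of the projections
  have hEC : ∀ k : ℕ, ∃ (k' : ℕ) (C : ℝ), 0 < C ∧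
      ∀ (j : ℤ) (x : E), p k (ι x j • e j) ≤ C * p k' x := by
    intro k
    obtain ⟨k', C, hC, hEC'⟩ := weightedShift_aux_EC p hp hmono hcomplete π H k
    exact ⟨k', C, hC, fun j x => hEC' j x⟩
  -- the key estimate
  have hkey : ∀ (k k' : ℕ) (C : ℝ), 0 < C →
      (∀ (j : ℤ) (x : E), p k (ι x j • e j) ≤ C * p k' x) →
      ∀ (x : E) (t : ℤ), ι x t ≠ 0 → ∀ j : ℤ,
      ‖D j‖ * p k (e j) ≤ (C * ‖D t‖ / ‖ι x t‖) * p k' ((Fw ^ (j - t)) x) := by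
    intro k k' C hC hECk x t ht j
    have hb : (0 : ℝ) < ‖ι x t‖ := norm_pos_iff.mpr ht
    have h1 := hECk j ((Fw ^ (j - t)) x)
    rw [hcoord] at h1
    have h2 : j - (j - t) = t := by ring
    rw [h2, map_smul_eq_mul, norm_mul, norm_div] at h1
    -- h1 : ‖D j‖ / ‖D t‖ * ‖ι x t‖ * p k (e j) ≤ C * p k' (...)
    rw [div_mul_eq_mul_div, div_mul_eq_mul_div, div_le_iff₀ (hDnorm t)] at h1
    rw [div_mul_eq_mul_div, le_div_iff₀ hb]
    calc ‖D j‖ * p k (e j) * ‖ι x t‖ = ‖D j‖ * ‖ι x t‖ * p k (e j) := by ring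
      _ ≤ C * p k' ((Fw ^ (j - t)) x) * ‖D t‖ := h1
      _ = C * ‖D t‖ * p k' ((Fw ^ (j - t)) x) := by ring
  have hnz : ∀ x : E, x ≠ 0 → ∃ t : ℤ, ι x t ≠ 0 := by
    intro x hx
    by_contra h
    push_neg at h
    refine hx (hι_inj ?_)
    rw [map_zero]
    funext j
    exact h j
  constructor
  · constructor
    · -- (i) → (ii)
      intro hExp
      obtain ⟨k, hk⟩ := hExp (e 1) (hene 1)
      refine ⟨k, ?_⟩
      have hval : ∀ n : ℤ, p k ((Fw ^ n) (e 1)) = ‖D (1 + n)‖ * p k (e (1 + n)) := by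
        intro n; rw [horbp, hD1, norm_one, div_one]
      by_cases hfwd : ∀ R : ℝ, ∃ n : ℕ, 1 ≤ n ∧
          R < (∏ j ∈ Finset.Icc (1 : ℤ) (n : ℤ), ‖w j‖) * p k (e ((n : ℤ) + 1))
      · exact Or.inl hfwd
      · right
        push_neg at hfwd
        obtain ⟨R₀, hR₀⟩ := hfwd
        intro R
        obtain ⟨n, hn⟩ := hk (max R (max R₀ (p k (e 1))))
        rw [hval] at hn
        rcases lt_trichotomy n 0 with h | h | h
        · refine ⟨(-n).toNat, by omega, ?_⟩
          have hcast : 1 - ((((-n).toNat) : ℕ) : ℤ) = 1 + n := by omega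
          rw [hDneg_eq, hcast]
          exact lt_of_le_of_lt (le_max_left _ _) hn
        · exfalso
          rw [h] at hn
          rw [show (1 : ℤ) + 0 = 1 from by ring, hD1, norm_one, one_mul] at hn
          exact absurd hn (not_lt.mpr (le_max_of_le_right (le_max_right _ _)))
        · exfalso
          have h1 := hR₀ n.toNat (by omega)
          rw [hDpos_eq] at h1
          have hc : ((n.toNat : ℕ) : ℤ) = n := by omega
          rw [hc] at h1
          rw [show (1 : ℤ) + n = n + 1 from by ring] at hn
          have h2 := lt_of_le_of_lt (le_max_of_le_right (le_max_left _ _)) hn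
          exact absurd h1 (not_le.mpr h2)
    · -- (ii) → (i)
      rintro ⟨k, hk⟩ x hx
      obtain ⟨k', C, hC, hECk⟩ := hEC k
      obtain ⟨t, ht⟩ := hnz x hx
      have hkeyj := hkey k k' C hC hECk x t ht
      have hb : (0 : ℝ) < ‖ι x t‖ := norm_pos_iff.mpr ht
      set A : ℝ := C * ‖D t‖ / ‖ι x t‖ with hA
      have hApos : 0 < A := by
        rw [hA]
        have := hDnorm t
        positivity
      refine ⟨k', fun R => ?_⟩
      rcases hk with hk | hk
      · obtain ⟨n, hn1, hn2⟩ := hk (A * R)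
        rw [hDpos_eq] at hn2
        refine ⟨(n : ℤ) + 1 - t, ?_⟩
        have h3 := hkeyj ((n : ℤ) + 1)
        exact (mul_lt_mul_iff_right₀ hApos).mp (lt_of_lt_of_le hn2 h3)
      · obtain ⟨n, hn1, hn2⟩ := hk (A * R)
        rw [hDneg_eq] at hn2
        refine ⟨1 - (n : ℤ) - t, ?_⟩
        have h3 := hkeyj (1 - (n : ℤ))
        exact (mul_lt_mul_iff_right₀ hApos).mp (lt_of_lt_of_le hn2 h3)
  · constructor
    · -- (ii) → (iii)
      rintro ⟨k, hk | hk⟩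
      · left
        intro x hx
        obtain ⟨k', C, hC, hECk⟩ := hEC k
        obtain ⟨t, ht⟩ := hnz x hx
        have hkeyj := hkey k k' C hC hECk x t ht
        have hb : (0 : ℝ) < ‖ι x t‖ := norm_pos_iff.mpr ht
        set A : ℝ := C * ‖D t‖ / ‖ι x t‖ with hA
        have hApos : 0 < A := by
          rw [hA]
          have := hDnorm t
          positivity
        refine ⟨k', fun R => ?_⟩
        set τ : ℕ := t.toNat with hτ
        obtain ⟨m, hm1, hm2⟩ := hk (max (A * R)
          (∑ i ∈ Finset.range τ,
            (∏ j ∈ Finset.Icc (1 : ℤ) (i : ℤ), ‖w j‖) * p k (e ((i : ℤ) + 1))))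
        have hmτ : τ ≤ m := by
          by_contra hcon
          push_neg at hcon
          have h5 : (∏ j ∈ Finset.Icc (1 : ℤ) (m : ℤ), ‖w j‖) * p k (e ((m : ℤ) + 1)) ≤
              ∑ i ∈ Finset.range τ,
                (∏ j ∈ Finset.Icc (1 : ℤ) (i : ℤ), ‖w j‖) * p k (e ((i : ℤ) + 1)) :=
            Finset.single_le_sum
              (f := fun i : ℕ => (∏ j ∈ Finset.Icc (1 : ℤ) (i : ℤ), ‖w j‖) * p k (e ((i : ℤ) + 1)))
              (fun i _ => mul_nonneg (Finset.prod_nonneg fun _ _ => norm_nonneg _)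
                (apply_nonneg _ _))
              (Finset.mem_range.mpr hcon)
          have h6 := lt_of_le_of_lt (le_max_right _ _) hm2
          linarith
        have hmt : t ≤ (m : ℤ) := le_trans (Int.self_le_toNat t) (by exact_mod_cast hmτ)
        refine ⟨((m : ℤ) + 1 - t).toNat, by omega, ?_⟩
        rw [hiter, show ((((m : ℤ) + 1 - t).toNat : ℕ) : ℤ) = (m : ℤ) + 1 - t from by omega]
        rw [hDpos_eq] at hm2
        have h3 := hkeyj ((m : ℤ) + 1)
        have h4 := lt_of_le_of_lt (le_max_left _ _) (lt_of_lt_of_le hm2 h3)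
        exact (mul_lt_mul_iff_right₀ hApos).mp h4
      · right
        intro x hx
        obtain ⟨k', C, hC, hECk⟩ := hEC k
        obtain ⟨t, ht⟩ := hnz x hx
        have hkeyj := hkey k k' C hC hECk x t ht
        have hb : (0 : ℝ) < ‖ι x t‖ := norm_pos_iff.mpr ht
        set A : ℝ := C * ‖D t‖ / ‖ι x t‖ with hA
        have hApos : 0 < A := by
          rw [hA]
          have := hDnorm t
          positivity
        refine ⟨k', fun R => ?_⟩
        set τ : ℕ := (2 - t).toNat with hτ
        obtain ⟨m, hm1, hm2⟩ := hk (max (A * R)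
          (∑ i ∈ Finset.range τ,
            (∏ j ∈ Finset.Icc (1 - (i : ℤ)) (0 : ℤ), ‖w j‖)⁻¹ * p k (e (1 - (i : ℤ)))))
        have hmτ : τ ≤ m := by
          by_contra hcon
          push_neg at hcon
          have h5 : (∏ j ∈ Finset.Icc (1 - (m : ℤ)) (0 : ℤ), ‖w j‖)⁻¹ * p k (e (1 - (m : ℤ))) ≤
              ∑ i ∈ Finset.range τ,
                (∏ j ∈ Finset.Icc (1 - (i : ℤ)) (0 : ℤ), ‖w j‖)⁻¹ * p k (e (1 - (i : ℤ))) :=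
            Finset.single_le_sum
              (f := fun i : ℕ =>
                (∏ j ∈ Finset.Icc (1 - (i : ℤ)) (0 : ℤ), ‖w j‖)⁻¹ * p k (e (1 - (i : ℤ))))
              (fun i _ => mul_nonneg (inv_nonneg.mpr
                (Finset.prod_nonneg fun _ _ => norm_nonneg _)) (apply_nonneg _ _))
              (Finset.mem_range.mpr hcon)
          have h6 := lt_of_le_of_lt (le_max_right _ _) hm2
          linarith
        have hmt : 2 - t ≤ (m : ℤ) := le_trans (Int.self_le_toNat (2 - t)) (by exact_mod_cast hmτ)
        refine ⟨((m : ℤ) + t - 1).toNat, by omega, ?_⟩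
        rw [hiterinv, show -((((m : ℤ) + t - 1).toNat : ℕ) : ℤ) = 1 - (m : ℤ) - t from by omega]
        rw [hDneg_eq] at hm2
        have h3 := hkeyj (1 - (m : ℤ))
        rw [show 1 - (m : ℤ) - t = 1 - (m : ℤ) - t from rfl] at h3
        have h4 := lt_of_le_of_lt (le_max_left _ _) (lt_of_lt_of_le hm2 h3)
        exact (mul_lt_mul_iff_right₀ hApos).mp h4
    · -- (iii) → (ii)
      rintro (hPE | hPE)
      · obtain ⟨k, hk⟩ := hPE (e 1) (hene 1)
        refine ⟨k, Or.inl fun R => ?_⟩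
        obtain ⟨n, hn1, hn2⟩ := hk R
        refine ⟨n, hn1, ?_⟩
        rw [hiter, horbp, hD1, norm_one, div_one] at hn2
        rw [hDpos_eq]
        rwa [show (1 : ℤ) + (n : ℤ) = (n : ℤ) + 1 from by ring] at hn2
      · obtain ⟨k, hk⟩ := hPE (e 1) (hene 1)
        refine ⟨k, Or.inr fun R => ?_⟩
        obtain ⟨n, hn1, hn2⟩ := hk R
        refine ⟨n, hn1, ?_⟩
        rw [hiterinv, horbp, hD1, norm_one, div_one] at hn2
        rw [hDneg_eq]
        rwa [show (1 : ℤ) + -(n : ℤ) = 1 - (n : ℤ) from by ring] at hn2
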